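/- For $n \geq 4$, the rank of the matrix $\Gamma^n_\sigma$ equals the rank of $A(B_n)$ plus one. -/

import Mathlib

def marginMatrix (n : ℕ) (R : Type*) [Zero R] [One R] :
    Matrix (Σ j : Fin (n-2), ({x : Fin (n-2) // x ≠ j} → Fin 2)) ((Fin (n-2)) → Fin 2) R :=
  fun r i => if (∀ x : {x : Fin (n-2) // x ≠ r.1}, i x.1 = r.2 x) then 1 else 0

def gammaSigma (n : ℕ) :
    Matrix ((Σ j : Fin (n-2), ({x : Fin (n-2) // x ≠ j} → Fin 2)) ⊕ Fin 2)
      (Fin 2 ⊕ {i : (Fin (n-2)) → Fin 2 // i ≠ 0}) ℚ :=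
  fun r c =>
    match r, c with
    | Sum.inl r, Sum.inl _ => marginMatrix n ℚ r 0
    | Sum.inl r, Sum.inr i => marginMatrix n ℚ r i.1
    | Sum.inr l, Sum.inl l' => if l = l' then 1 else 0
    | Sum.inr l, Sum.inr i =>
        if (∑ x, (i.1 x : ℕ)) % 2 = 1 then (if l = 0 then 1 else 0)
        else (if l = 1 then 1 else 0)

open Matrix Submodule in
theorem rank_aux (m : ℕ) (hm : 0 < m)
    (A : Matrix (Σ j : Fin m, ({x : Fin m // x ≠ j} → Fin 2)) ((Fin m) → Fin 2) ℚ)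
    (Γ : Matrix ((Σ j : Fin m, ({x : Fin m // x ≠ j} → Fin 2)) ⊕ Fin 2)
      (Fin 2 ⊕ {i : (Fin m) → Fin 2 // i ≠ 0}) ℚ)
    (hA : ∀ r i, A r i = if (∀ x : {x : Fin m // x ≠ r.1}, i x.1 = r.2 x) then 1 else 0)
    (hΓ1 : ∀ r l, Γ (Sum.inl r) (Sum.inl l) = A r 0)
    (hΓ2 : ∀ r i, Γ (Sum.inl r) (Sum.inr i) = A r i.1)
    (hΓ3 : ∀ l l', Γ (Sum.inr l) (Sum.inl l') = if l = l' then 1 else 0)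
    (hΓ4 : ∀ (l : Fin 2) i, Γ (Sum.inr l) (Sum.inr i) =
        if (∑ x, (i.1 x : ℕ)) % 2 = 1 then (if l = 0 then 1 else 0)
        else (if l = 1 then 1 else 0)) :
    Γ.rank = A.rank + 1 := by
  classical
  -- the key column-sum lemma
  have key : ∀ (j : Fin m) (i : Fin m → Fin 2),
      ∑ a : ({x : Fin m // x ≠ j} → Fin 2), A ⟨j, a⟩ i = 1 := by
    intro j i
    have h1 : ∀ a : ({x : Fin m // x ≠ j} → Fin 2),
        A ⟨j, a⟩ i = if a = (fun x : {x : Fin m // x ≠ j} => i x.1) then (1:ℚ) else 0 := by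
      intro a
      by_cases h : a = fun x : {x : Fin m // x ≠ j} => i x.1
      · subst h; rw [hA]; simp
      · rw [hA, if_neg, if_neg h]
        intro hc; exact h (funext fun x => (hc x).symm)
    rw [Finset.sum_congr rfl (fun a _ => h1 a), Finset.sum_ite_eq' Finset.univ]
    simp
  set S : Set (Fin 2 ⊕ {i : (Fin m) → Fin 2 // i ≠ 0} → ℚ) :=
    Set.range (fun r => Γ (Sum.inl r)) with hS
  set v := Γ (Sum.inr 0) with hv
  set w := Γ (Sum.inr 1) with hw
  have hvne : v ≠ 0 := by
    intro h
    have := congrFun h (Sum.inl 0)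
    rw [hv, hΓ3] at this
    simp at this
  -- w is in span S ⊔ span {v}
  let j₀ : Fin m := ⟨0, hm⟩
  have hu : ∀ c, (∑ a : ({x : Fin m // x ≠ j₀} → Fin 2), Γ (Sum.inl ⟨j₀, a⟩)) c = 1 := by
    intro c
    rw [Finset.sum_apply]
    cases c with
    | inl l => rw [Finset.sum_congr rfl (fun a _ => hΓ1 ⟨j₀, a⟩ l)]; exact key j₀ 0
    | inr i => rw [Finset.sum_congr rfl (fun a _ => hΓ2 ⟨j₀, a⟩ i)]; exact key j₀ i.1
  have hwuv : w = (∑ a : ({x : Fin m // x ≠ j₀} → Fin 2), Γ (Sum.inl ⟨j₀, a⟩)) - v := by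
    funext c
    rw [Pi.sub_apply, hu c]
    cases c with
    | inl l =>
      rw [hw, hv, hΓ3, hΓ3]
      fin_cases l <;> norm_num
    | inr i =>
      rw [hw, hv, hΓ4, hΓ4]
      by_cases h : (∑ x, (i.1 x : ℕ)) % 2 = 1 <;> simp [h]
  -- span of all rows
  have hspan : span ℚ (Set.range Γ) = span ℚ S ⊔ span ℚ {v} := by
    apply le_antisymm
    · rw [span_le]
      rintro _ ⟨r, rfl⟩
      cases r with
      | inl r =>
        exact Submodule.mem_sup_left (subset_span ⟨r, rfl⟩)
      | inr l =>
        fin_cases l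
        · exact Submodule.mem_sup_right (subset_span rfl)
        · show w ∈ _
          rw [hwuv]
          apply sub_mem
          · exact Submodule.mem_sup_left (sum_mem fun a _ => subset_span ⟨_, rfl⟩)
          · exact Submodule.mem_sup_right (subset_span rfl)
    · apply sup_le <;> rw [span_le]
      · rintro _ ⟨r, rfl⟩; exact subset_span ⟨Sum.inl r, rfl⟩
      · rintro _ rfl; exact subset_span ⟨Sum.inr 0, rfl⟩
  -- v not in span S
  have hvS : v ∉ span ℚ S := by
    intro hmem
    let g : (Fin 2 ⊕ {i : (Fin m) → Fin 2 // i ≠ 0} → ℚ) →ₗ[ℚ] ℚ :=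
      LinearMap.proj (R := ℚ) (φ := fun _ : Fin 2 ⊕ {i : (Fin m) → Fin 2 // i ≠ 0} => ℚ) (Sum.inl 0) -
        LinearMap.proj (R := ℚ) (φ := fun _ : Fin 2 ⊕ {i : (Fin m) → Fin 2 // i ≠ 0} => ℚ) (Sum.inl 1)
    have hgS : span ℚ S ≤ LinearMap.ker g := by
      rw [span_le]
      rintro _ ⟨r, rfl⟩
      simp only [SetLike.mem_coe, LinearMap.mem_ker, LinearMap.sub_apply, LinearMap.proj_apply, g]
      rw [hΓ1, hΓ1, sub_self]
    have : g v = 0 := hgS hmem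
    simp only [LinearMap.sub_apply, LinearMap.proj_apply, g] at this
    rw [hv, hΓ3, hΓ3] at this
    norm_num at this
  -- finrank of sup
  have hdisj : Disjoint (span ℚ S) (span ℚ {v}) :=
    (disjoint_span_singleton' hvne).mpr hvS
  have hsup : Module.finrank ℚ ↥(span ℚ S ⊔ span ℚ {v}) = Module.finrank ℚ ↥(span ℚ S) + 1 := by
    have := Submodule.finrank_sup_add_finrank_inf_eq (span ℚ S) (span ℚ {v})
    rw [hdisj.eq_bot, finrank_bot, add_zero, finrank_span_singleton hvne] at this
    exact this
  -- finrank span S = rank A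
  have hSA : Module.finrank ℚ ↥(span ℚ S) = Module.finrank ℚ ↥(span ℚ (Set.range A)) := by
    let φ : ((Fin m → Fin 2) → ℚ) →ₗ[ℚ] (Fin 2 ⊕ {i : (Fin m) → Fin 2 // i ≠ 0} → ℚ) :=
      LinearMap.funLeft ℚ ℚ (fun c => match c with | Sum.inl _ => 0 | Sum.inr i => i.1)
    let ψ : (Fin 2 ⊕ {i : (Fin m) → Fin 2 // i ≠ 0} → ℚ) →ₗ[ℚ] ((Fin m → Fin 2) → ℚ) :=
      LinearMap.funLeft ℚ ℚ (fun i => if hi : i = 0 then Sum.inl 0 else Sum.inr ⟨i, hi⟩)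
    have hφ : ∀ r, φ (A r) = Γ (Sum.inl r) := by
      intro r; funext c
      cases c with
      | inl l => rw [hΓ1]; rfl
      | inr i => rw [hΓ2]; rfl
    have hψ : ∀ r, ψ (Γ (Sum.inl r)) = A r := by
      intro r; funext i
      show Γ (Sum.inl r) (if hi : i = 0 then Sum.inl 0 else Sum.inr ⟨i, hi⟩) = A r i
      split
      · next h => rw [hΓ1, h]
      · rw [hΓ2]
    have h1 : Submodule.map φ (span ℚ (Set.range A)) = span ℚ S := by
      rw [Submodule.map_span, show ⇑φ '' Set.range A = Set.range (⇑φ ∘ A) from (Set.range_comp _ _).symm]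
      congr 1
      ext x; constructor
      · rintro ⟨r, rfl⟩; exact ⟨r, (hφ r).symm⟩
      · rintro ⟨r, rfl⟩; exact ⟨r, hφ r⟩
    have h2 : Submodule.map ψ (span ℚ S) = span ℚ (Set.range A) := by
      rw [Submodule.map_span, ← Set.range_comp]
      congr 1
      ext x; constructor
      · rintro ⟨r, rfl⟩; exact ⟨r, (hψ r).symm⟩
      · rintro ⟨r, rfl⟩; exact ⟨r, hψ r⟩
    apply le_antisymm
    · rw [← h1]; exact Submodule.finrank_map_le φ _
    · rw [← h2]; exact Submodule.finrank_map_le ψ _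
  rw [Matrix.rank_eq_finrank_span_row, Matrix.rank_eq_finrank_span_row]
  show Module.finrank ℚ ↥(span ℚ (Set.range Γ)) = Module.finrank ℚ ↥(span ℚ (Set.range A)) + 1
  rw [hspan, hsup, hSA]

theorem rank_gammaSigma (n : ℕ) (hn : 4 ≤ n) :
    (gammaSigma n).rank = (marginMatrix n ℚ).rank + 1 := by
  exact rank_aux (n-2) (by omega) (marginMatrix n ℚ) (gammaSigma n)
    (fun r i => rfl) (fun r l => rfl) (fun r i => rfl) (fun l l' => rfl) (fun l i => rfl)
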